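/- Let S ⊂ ℙ²(ℂ) be a germ of real surface and suppose there exist two pencils of complex projective lines 𝒫₁ = {x = t} and 𝒫₂ = {y = t} (in affine coordinates (x,y), i.e., the pencils through [0:1:0] and [1:0:0]) and two transverse C¹ foliations ℱ₁, ℱ₂ of S such that every leaf of ℱᵢ is contained in a line of 𝒫ᵢ. Then there exist real curves C₁ ⊂ ℂ_x and C₂ ⊂ ℂ_y such that S ⊂ C₁ × C₂ ⊂ ℂ², where C₁ × C₂ is viewed as a real surface in ℂ². -/

import Mathlib

open Filter Set



/-- A (germ of) real curve in ℂ: near each of its points it is the image of a regular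
C¹ parametrization. -/
def IsRealCurve (C : Set ℂ) : Prop :=
  ∀ p ∈ C, ∃ (γ : ℝ → ℂ) (U : Set ℂ), U ∈ nhds p ∧ ContDiff ℝ 1 γ ∧
    (∀ t : ℝ, deriv γ t ≠ 0) ∧ C ∩ U = Set.range γ ∩ U



/-- Evaluate a continuous linear map on ℝ×ℝ via the standard basis. -/
lemma clm_eval {M : Type*} [NormedAddCommGroup M] [NormedSpace ℝ M]
    (L : (ℝ × ℝ) →L[ℝ] M) (w : ℝ × ℝ) :
    L w = w.1 • L (1, 0) + w.2 • L (0, 1) := by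
  have : w = w.1 • ((1:ℝ), (0:ℝ)) + w.2 • ((0:ℝ), (1:ℝ)) := by
    simp [Prod.ext_iff]
  nth_rewrite 1 [this]
  rw [map_add, map_smul, map_smul]

/-- Chart lemma: if `φ = f ∘ g` with `g, φ` C¹ and the derivative of `g` at `w₀`
is nonzero in direction `v`, then `f` is C¹ at `g w₀` and `range g` is a neighborhood. -/
lemma chart {g : ℝ × ℝ → ℝ} {f : ℝ → ℂ} {φ : ℝ × ℝ → ℂ}
    (hg : ContDiff ℝ 1 g) (hφ : ContDiff ℝ 1 φ) (hf : ∀ w, φ w = f (g w))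
    (w₀ : ℝ × ℝ) (v : ℝ × ℝ) (hv : fderiv ℝ g w₀ v ≠ 0) :
    ContDiffAt ℝ 1 f (g w₀) ∧ Set.range g ∈ nhds (g w₀) := by
  set c : ℝ → ℝ × ℝ := fun s => w₀ + s • v with hc_def
  have hc : ContDiff ℝ 1 c := contDiff_const.add (contDiff_id.smul contDiff_const)
  set h : ℝ → ℝ := fun s => g (c s) with hh_def
  have hc0 : c 0 = w₀ := by simp [hc_def]
  have hh : ContDiffAt ℝ 1 h 0 := (hg.contDiffAt (x := c 0)).comp 0 hc.contDiffAt
  have hdc : HasDerivAt c v 0 := by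
    have : HasDerivAt (fun s : ℝ => s • v) ((1:ℝ) • v) 0 := (hasDerivAt_id 0).smul_const v
    simpa only [one_smul] using (this.const_add w₀)
  have hdh : HasDerivAt h (fderiv ℝ g w₀ v) 0 := by
    have hgd : HasFDerivAt g (fderiv ℝ g w₀) (c 0) := by
      rw [hc0]; exact (hg.differentiable one_ne_zero w₀).hasFDerivAt
    exact hgd.comp_hasDerivAt 0 hdc
  have hfd : HasFDerivAt h ((ContinuousLinearEquiv.unitsEquivAut ℝ
      (Units.mk0 _ hv) : ℝ →L[ℝ] ℝ)) 0 := hdh.hasFDerivAt_equiv hv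
  have hinv : ContDiffAt ℝ 1 (hh.localInverse hfd one_ne_zero) (h 0) :=
    hh.to_localInverse hfd one_ne_zero
  have hright : ∀ᶠ t in nhds (h 0), h (hh.localInverse hfd one_ne_zero t) = t :=
    (hh.hasStrictFDerivAt' hfd one_ne_zero).eventually_right_inverse
  have hgw : h 0 = g w₀ := by rw [hh_def]; simp [hc0]
  constructor
  · rw [← hgw]
    have heq : f =ᶠ[nhds (h 0)] fun t => φ (c (hh.localInverse hfd one_ne_zero t)) := by
      filter_upwards [hright] with t ht
      rw [hf]; simp only [hh_def] at ht; rw [ht]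
    refine ContDiffAt.congr_of_eventuallyEq ?_ heq
    exact (hφ.contDiffAt).comp _ (hc.contDiffAt.comp _ hinv)
  · rw [← hgw]
    have : ∀ᶠ t in nhds (h 0), t ∈ Set.range g := by
      filter_upwards [hright] with t ht
      exact ⟨c (hh.localInverse hfd one_ne_zero t), ht⟩
    exact this


lemma open_mem_lt_csInf {I : Set ℝ} (ho : IsOpen I) {x : ℝ} (hx : x ∈ I) (hb : BddBelow I) :
    sInf I < x := by
  obtain ⟨ε, hε, hball⟩ := Metric.isOpen_iff.1 ho x hx
  have hmem : x - ε/2 ∈ I := by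
    apply hball
    rw [Metric.mem_ball, Real.dist_eq]
    have h2 : x - ε/2 - x = -(ε/2) := by ring
    rw [h2, abs_neg, abs_of_pos (show (0:ℝ) < ε/2 by linarith)]
    linarith
  calc sInf I ≤ x - ε/2 := csInf_le hb hmem
    _ < x := by linarith

lemma open_mem_lt_csSup {I : Set ℝ} (ho : IsOpen I) {x : ℝ} (hx : x ∈ I) (hb : BddAbove I) :
    x < sSup I := by
  obtain ⟨ε, hε, hball⟩ := Metric.isOpen_iff.1 ho x hx
  have hmem : x + ε/2 ∈ I := by
    apply hball
    rw [Metric.mem_ball, Real.dist_eq]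
    have h2 : x + ε/2 - x = ε/2 := by ring
    rw [h2, abs_of_pos (show (0:ℝ) < ε/2 by linarith)]
    linarith
  calc x < x + ε/2 := by linarith
    _ ≤ sSup I := le_csSup hb hmem

lemma classify {I : Set ℝ} (ho : IsOpen I) (hc : IsPreconnected I) (hne : I.Nonempty) :
    I = univ ∨ (∃ a, I = Ioi a) ∨ (∃ b, I = Iio b) ∨ (∃ a b, a < b ∧ I = Ioo a b) := by
  have hoc : OrdConnected I := hc.ordConnected
  by_cases hA : BddAbove I <;> by_cases hB : BddBelow I
  · -- Ioo case
    right; right; right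
    obtain ⟨x, hx⟩ := id hne
    refine ⟨sInf I, sSup I, lt_trans (open_mem_lt_csInf ho hx hB) (open_mem_lt_csSup ho hx hA), ?_⟩
    apply Subset.antisymm
    · intro y hy; exact ⟨open_mem_lt_csInf ho hy hB, open_mem_lt_csSup ho hy hA⟩
    · intro y hy
      obtain ⟨x₁, hx₁, hx₁y⟩ := exists_lt_of_csInf_lt hne hy.1
      obtain ⟨x₂, hx₂, hyx₂⟩ := exists_lt_of_lt_csSup hne hy.2
      exact hoc.out hx₁ hx₂ ⟨le_of_lt hx₁y, le_of_lt hyx₂⟩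
  · right; right; left
    refine ⟨sSup I, Subset.antisymm (fun y hy => open_mem_lt_csSup ho hy hA) ?_⟩
    intro y hy
    obtain ⟨x₂, hx₂, hyx₂⟩ := exists_lt_of_lt_csSup hne hy
    obtain ⟨x₁, hx₁, hx₁y⟩ := (not_bddBelow_iff.1 hB) y
    exact hoc.out hx₁ hx₂ ⟨le_of_lt hx₁y, le_of_lt hyx₂⟩
  · right; left
    refine ⟨sInf I, Subset.antisymm (fun y hy => open_mem_lt_csInf ho hy hB) ?_⟩
    intro y hy
    obtain ⟨x₁, hx₁, hx₁y⟩ := exists_lt_of_csInf_lt hne hy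
    obtain ⟨x₂, hx₂, hyx₂⟩ := (not_bddAbove_iff.1 hA) y
    exact hoc.out hx₁ hx₂ ⟨le_of_lt hx₁y, le_of_lt hyx₂⟩
  · left
    refine eq_univ_of_forall fun y => ?_
    obtain ⟨x₂, hx₂, hyx₂⟩ := (not_bddAbove_iff.1 hA) y
    obtain ⟨x₁, hx₁, hx₁y⟩ := (not_bddBelow_iff.1 hB) y
    exact hoc.out hx₁ hx₂ ⟨le_of_lt hx₁y, le_of_lt hyx₂⟩


noncomputable def sq1 (t : ℝ) : ℝ := Real.sqrt (1 + t^2)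

lemma sq1_pos (t : ℝ) : 0 < sq1 t := Real.sqrt_pos.2 (by positivity)

lemma sq1_mul_self (t : ℝ) : sq1 t * sq1 t = 1 + t^2 :=
  Real.mul_self_sqrt (by positivity)

lemma neg_lt_sq1 (t : ℝ) : -t < sq1 t := by
  nlinarith [sq1_pos t, sq1_mul_self t]

lemma lt_sq1 (t : ℝ) : t < sq1 t := by
  nlinarith [sq1_pos t, sq1_mul_self t]

lemma sq1_contDiff : ContDiff ℝ 1 sq1 := by
  rw [contDiff_iff_contDiffAt]
  intro t
  have h : (1 : ℝ) + t^2 ≠ 0 := by positivity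
  exact (Real.contDiffAt_sqrt h).comp t
    ((contDiff_const.add (contDiff_id.pow 2)).contDiffAt)

lemma sq1_hasDerivAt (t : ℝ) : HasDerivAt sq1 (t / sq1 t) t := by
  have h : (1 : ℝ) + t^2 ≠ 0 := by positivity
  have h1 : HasDerivAt (fun t : ℝ => 1 + t^2) (2 * t) t := by
    simpa using ((hasDerivAt_pow 2 t).const_add 1)
  have h2 : HasDerivAt sq1 (1 / (2 * √(1 + t ^ 2)) * (2 * t)) t := (Real.hasDerivAt_sqrt h).comp t h1
  convert h2 using 1
  rw [sq1]
  field_simp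

/-- The map `t ↦ t + sq1 t` is a C¹ diffeo of ℝ onto `(0, ∞)`. -/
noncomputable def sfun (t : ℝ) : ℝ := t + sq1 t

lemma sfun_pos (t : ℝ) : 0 < sfun t := by have := neg_lt_sq1 t; rw [sfun]; linarith

lemma sfun_contDiff : ContDiff ℝ 1 sfun := contDiff_id.add sq1_contDiff

lemma sfun_hasDerivAt (t : ℝ) : HasDerivAt sfun (1 + t / sq1 t) t :=
  (hasDerivAt_id t).add (sq1_hasDerivAt t)

lemma sfun_deriv_pos (t : ℝ) : 0 < 1 + t / sq1 t := by
  have h := neg_lt_sq1 t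
  have hp := sq1_pos t
  have : -1 < t / sq1 t := by
    rw [neg_lt, ← neg_div]
    exact (div_lt_one hp).2 h
  linarith

lemma sfun_surj {u : ℝ} (hu : 0 < u) : ∃ t, sfun t = u := by
  refine ⟨(u^2 - 1)/(2*u), ?_⟩
  have hu' : u ≠ 0 := ne_of_gt hu
  have hut : u - (u^2 - 1)/(2*u) = (u^2 + 1)/(2*u) := by field_simp; ring
  have hpos : (0:ℝ) < u - (u^2 - 1)/(2*u) := by rw [hut]; positivity
  have hsq : sq1 ((u^2 - 1)/(2*u)) = u - (u^2 - 1)/(2*u) := by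
    rw [sq1, show 1 + ((u^2 - 1)/(2*u))^2 = (u - (u^2 - 1)/(2*u))^2 by rw [hut]; field_simp; ring]
    exact Real.sqrt_sq hpos.le
  rw [sfun, hsq]; ring

/-- The map `t ↦ (1 + t / sq1 t)/2` is a C¹ diffeo of ℝ onto `(0, 1)`. -/
noncomputable def mfun (t : ℝ) : ℝ := (1 + t / sq1 t) / 2

lemma mfun_contDiff : ContDiff ℝ 1 mfun := by
  have : ContDiff ℝ 1 fun t => t / sq1 t := by
    apply contDiff_id.div sq1_contDiff
    intro t; exact (sq1_pos t).ne'
  exact ((contDiff_const.add this).div_const 2)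

lemma mfun_mem (t : ℝ) : mfun t ∈ Ioo (0:ℝ) 1 := by
  have hp := sq1_pos t
  have h1 : t / sq1 t < 1 := (div_lt_one hp).2 (lt_sq1 t)
  have h2 : -1 < t / sq1 t := by
    rw [neg_lt, ← neg_div]; exact (div_lt_one hp).2 (neg_lt_sq1 t)
  constructor <;> rw [mfun] <;> [linarith; linarith]

lemma mfun_hasDerivAt (t : ℝ) :
    HasDerivAt mfun ((sq1 t - t * (t / sq1 t)) / (sq1 t)^2 / 2) t := by
  have h : HasDerivAt (fun t => t / sq1 t)
      ((1 * sq1 t - t * (t / sq1 t)) / (sq1 t)^2) t :=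
    (hasDerivAt_id t).div (sq1_hasDerivAt t) (sq1_pos t).ne'
  have h' := ((h.const_add 1).div_const 2); simp only [one_mul] at h'; exact h'

lemma mfun_deriv_pos (t : ℝ) : 0 < (sq1 t - t * (t / sq1 t)) / (sq1 t)^2 / 2 := by
  have hp := sq1_pos t
  have hm := sq1_mul_self t
  have hnum : sq1 t - t * (t / sq1 t) = 1 / sq1 t := by
    field_simp
    nlinarith [hm]
  rw [hnum]
  positivity

lemma mfun_surj {x : ℝ} (hx : x ∈ Ioo (0:ℝ) 1) : ∃ t, mfun t = x := by
  set y := 2*x - 1 with hy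
  have hy1 : -1 < y := by simp [hy]; linarith [hx.1]
  have hy2 : y < 1 := by simp [hy]; linarith [hx.2]
  have h1y : (0:ℝ) < 1 - y^2 := by nlinarith
  set s := Real.sqrt (1 - y^2) with hs
  have hs0 : 0 < s := Real.sqrt_pos.2 h1y
  have hss : s * s = 1 - y^2 := Real.mul_self_sqrt h1y.le
  refine ⟨y / s, ?_⟩
  have hsq : sq1 (y / s) = 1 / s := by
    rw [sq1, show 1 + (y/s)^2 = (1/s)^2 by field_simp; nlinarith [hss]]
    exact Real.sqrt_sq (by positivity)
  rw [mfun, hsq]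
  field_simp
  linarith

lemma clm_eval' {M : Type*} [NormedAddCommGroup M] [NormedSpace ℝ M]
    (L : (ℝ × ℝ) →L[ℝ] M) (w : ℝ × ℝ) :
    L w = w.1 • L (1, 0) + w.2 • L (0, 1) := by
  have h : w = w.1 • ((1:ℝ), (0:ℝ)) + w.2 • ((0:ℝ), (1:ℝ)) := by simp [Prod.ext_iff]
  nth_rewrite 1 [h]
  rw [map_add, map_smul, map_smul]

lemma det_ne_zero {L₁ L₂ : (ℝ × ℝ) →L[ℝ] ℝ} (h : LinearIndependent ℝ ![L₁, L₂]) :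
    L₁ (1,0) * L₂ (0,1) - L₁ (0,1) * L₂ (1,0) ≠ 0 := by
  rw [LinearIndependent.pair_iff] at h
  intro hdet
  set a := L₁ (1,0); set b := L₁ (0,1); set c := L₂ (1,0); set d := L₂ (0,1)
  have key : ∀ s t : ℝ, s * a + t * c = 0 → s * b + t * d = 0 → s = 0 ∧ t = 0 := by
    intro s t h1 h2
    refine h s t ?_
    apply ContinuousLinearMap.ext
    intro w
    simp only [ContinuousLinearMap.add_apply, ContinuousLinearMap.coe_smul',
      Pi.smul_apply, smul_eq_mul, ContinuousLinearMap.zero_apply]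
    rw [clm_eval' L₁ w, clm_eval' L₂ w]
    simp only [smul_eq_mul]
    linear_combination w.1 * h1 + w.2 * h2
  by_cases hc : c ≠ 0
  · exact hc (key c (-a) (by ring) (by linear_combination -hdet)).1
  · push_neg at hc
    by_cases hd : d ≠ 0
    · exact hd (key d (-b) (by linear_combination hdet) (by ring)).1
    · push_neg at hd
      exact one_ne_zero (key 0 1 (by rw [hc]; ring) (by rw [hd]; ring)).2

lemma pair_swap {L₁ L₂ : (ℝ × ℝ) →L[ℝ] ℝ} (h : LinearIndependent ℝ ![L₁, L₂]) :
    LinearIndependent ℝ ![L₂, L₁] := by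
  rw [LinearIndependent.pair_iff] at h ⊢
  intro s t hst
  have := h t s (by rw [add_comm]; exact hst)
  exact ⟨this.2, this.1⟩

lemma vecs {L₁ L₂ : (ℝ × ℝ) →L[ℝ] ℝ} (h : LinearIndependent ℝ ![L₁, L₂]) :
    ∃ v : ℝ × ℝ, v ≠ 0 ∧ L₁ v ≠ 0 ∧ L₂ v = 0 := by
  have hdet := det_ne_zero h
  refine ⟨(-(L₂ (0,1)), L₂ (1,0)), ?_, ?_, ?_⟩
  · intro hv
    have h1 := congrArg Prod.fst hv
    have h2 := congrArg Prod.snd hv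
    simp only [Prod.fst_zero, Prod.snd_zero, neg_eq_zero] at h1 h2
    apply hdet
    rw [h1, h2]; ring
  · rw [clm_eval' L₁ _]
    simp only [smul_eq_mul]
    intro hcon
    exact hdet (by linear_combination -hcon)
  · rw [clm_eval' L₂ _]
    simp only [smul_eq_mul]
    ring
lemma exists_phi {I : Set ℝ} (ho : IsOpen I) (hc : IsPreconnected I) (hne : I.Nonempty) :
    ∃ φ : ℝ → ℝ, ContDiff ℝ 1 φ ∧ (∀ t, deriv φ t ≠ 0) ∧ Set.range φ = I := by
  rcases classify ho hc hne with h | ⟨a, h⟩ | ⟨b, h⟩ | ⟨a, b, hab, h⟩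
  · exact ⟨id, contDiff_id, fun t => by simp, by simp [h]⟩
  · refine ⟨fun t => a + sfun t, contDiff_const.add sfun_contDiff, fun t => ?_, ?_⟩
    · rw [((sfun_hasDerivAt t).const_add a).deriv]
      exact (sfun_deriv_pos t).ne'
    · rw [h]
      apply Subset.antisymm
      · rintro y ⟨t, rfl⟩
        simpa using (sfun_pos t)
      · intro y hy
        obtain ⟨t, ht⟩ := sfun_surj (show (0:ℝ) < y - a by simpa using hy)
        exact ⟨t, by show a + sfun t = y; rw [ht]; ring⟩
  · refine ⟨fun t => b - sfun t, contDiff_const.sub sfun_contDiff, fun t => ?_, ?_⟩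
    · rw [((sfun_hasDerivAt t).const_sub b).deriv]
      have := sfun_deriv_pos t
      intro hcon
      simp only [neg_eq_zero] at hcon
      linarith
    · rw [h]
      apply Subset.antisymm
      · rintro y ⟨t, rfl⟩
        simp only [mem_Iio]
        linarith [sfun_pos t]
      · intro y hy
        obtain ⟨t, ht⟩ := sfun_surj (show (0:ℝ) < b - y by simp only [mem_Iio] at hy; linarith)
        exact ⟨t, by show b - sfun t = y; rw [ht]; ring⟩
  · refine ⟨fun t => a + (b - a) * mfun t,
      contDiff_const.add (contDiff_const.mul mfun_contDiff), fun t => ?_, ?_⟩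
    · have hd : HasDerivAt (fun t => a + (b - a) * mfun t)
          ((b - a) * ((sq1 t - t * (t / sq1 t)) / (sq1 t)^2 / 2)) t :=
        ((mfun_hasDerivAt t).const_mul (b - a)).const_add a
      rw [hd.deriv]
      exact mul_ne_zero (by linarith) (mfun_deriv_pos t).ne'
    · rw [h]
      apply Subset.antisymm
      · rintro y ⟨t, rfl⟩
        obtain ⟨h1, h2⟩ := mfun_mem t
        constructor
        · simp only [mem_Ioi]; nlinarith
        · show a + (b - a) * mfun t < b
          nlinarith [mul_pos (sub_pos.2 hab) (sub_pos.2 h2)]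
      · intro y hy
        have hx : (y - a)/(b - a) ∈ Ioo (0:ℝ) 1 := by
          constructor
          · exact div_pos (by linarith [hy.1]) (by linarith)
          · rw [div_lt_one (by linarith)]; linarith [hy.2]
        obtain ⟨t, ht⟩ := mfun_surj hx
        refine ⟨t, ?_⟩
        show a + (b - a) * mfun t = y
        rw [ht, mul_div_assoc', mul_comm, mul_div_assoc, div_self (show b - a ≠ 0 by linarith), mul_one]
        ring


lemma coord {ψc : ℝ × ℝ → ℂ} {g : ℝ × ℝ → ℝ} {f : ℝ → ℂ}
    (hψc : ContDiff ℝ 1 ψc) (hg : ContDiff ℝ 1 g) (hf : ∀ w, ψc w = f (g w))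
    (hne : ∀ w₀ : ℝ × ℝ, ∃ v, fderiv ℝ g w₀ v ≠ 0)
    (hder : ∀ w₀ : ℝ × ℝ, deriv f (g w₀) ≠ 0) :
    ∃ γ : ℝ → ℂ, ContDiff ℝ 1 γ ∧ (∀ t, deriv γ t ≠ 0) ∧ ∀ w, ψc w ∈ Set.range γ := by
  have hchart : ∀ w₀ : ℝ × ℝ, ContDiffAt ℝ 1 f (g w₀) ∧ Set.range g ∈ nhds (g w₀) := by
    intro w₀
    obtain ⟨v, hv⟩ := hne w₀
    exact chart hg hψc hf w₀ v hv
  have hopen : IsOpen (Set.range g) := by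
    rw [isOpen_iff_mem_nhds]
    rintro t ⟨w₀, rfl⟩
    exact (hchart w₀).2
  obtain ⟨φ, hφcd, hφd, hφr⟩ := exists_phi hopen
    (isConnected_range hg.continuous).isPreconnected (Set.range_nonempty g)
  refine ⟨f ∘ φ, ?_, ?_, ?_⟩
  · rw [contDiff_iff_contDiffAt]
    intro t
    have hmem : φ t ∈ Set.range g := hφr ▸ Set.mem_range_self t
    obtain ⟨w₀, hw₀⟩ := hmem
    exact (show ContDiffAt ℝ 1 f (φ t) from hw₀ ▸ (hchart w₀).1).comp t hφcd.contDiffAt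
  · intro t
    obtain ⟨w₀, hw₀⟩ := (show φ t ∈ Set.range g from hφr ▸ Set.mem_range_self t)
    have hfd : HasDerivAt f (deriv f (φ t)) (φ t) :=
      (show DifferentiableAt ℝ f (φ t) from
        hw₀ ▸ (hchart w₀).1.differentiableAt one_ne_zero).hasDerivAt
    have hφd' : HasDerivAt φ (deriv φ t) t := (hφcd.differentiable one_ne_zero t).hasDerivAt
    have hcomp := HasDerivAt.scomp t hfd hφd'
    rw [hcomp.deriv]
    exact smul_ne_zero (hφd t) (hw₀ ▸ hder w₀)
  · intro w
    obtain ⟨t, ht⟩ := (show g w ∈ Set.range φ from hφr.symm ▸ Set.mem_range_self w)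
    exact ⟨t, by simp only [Function.comp_apply, ht, ← hf w]⟩

lemma fapp (f : ℝ → ℂ) (t r : ℝ) : fderiv ℝ f t r = r • deriv f t := by
  rw [← fderiv_apply_one_eq_deriv, show r = r • (1:ℝ) by simp, map_smul]
  simp

lemma isRealCurve_range {γ : ℝ → ℂ} (h1 : ContDiff ℝ 1 γ) (h2 : ∀ t, deriv γ t ≠ 0) :
    IsRealCurve (Set.range γ) :=
  fun _ _ => ⟨γ, Set.univ, Filter.univ_mem, h1, h2, rfl⟩

theorem stmt_15 (ψ : ℝ × ℝ → ℂ × ℂ) (g₁ g₂ : ℝ × ℝ → ℝ)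
    (hψ : ContDiff ℝ 1 ψ) (himm : ∀ w, Function.Injective (fderiv ℝ ψ w))
    (hg₁ : ContDiff ℝ 1 g₁) (hg₂ : ContDiff ℝ 1 g₂)
    (htrans : ∀ w, LinearIndependent ℝ ![fderiv ℝ g₁ w, fderiv ℝ g₂ w])
    (hleaf₁ : ∀ w w', g₁ w = g₁ w' → (ψ w).1 = (ψ w').1)
    (hleaf₂ : ∀ w w', g₂ w = g₂ w' → (ψ w).2 = (ψ w').2) :
    ∃ C₁ C₂ : Set ℂ, IsRealCurve C₁ ∧ IsRealCurve C₂ ∧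
      Set.range ψ ⊆ C₁ ×ˢ C₂ := by
  classical
  set ψ1 : ℝ × ℝ → ℂ := fun w => (ψ w).1 with hψ1def
  set ψ2 : ℝ × ℝ → ℂ := fun w => (ψ w).2 with hψ2def
  have hψ1 : ContDiff ℝ 1 ψ1 := contDiff_fst.comp hψ
  have hψ2 : ContDiff ℝ 1 ψ2 := contDiff_snd.comp hψ
  set f₁ : ℝ → ℂ := fun t => if h : ∃ w, g₁ w = t then ψ1 h.choose else 0 with hf₁def
  set f₂ : ℝ → ℂ := fun t => if h : ∃ w, g₂ w = t then ψ2 h.choose else 0 with hf₂def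
  have hf₁ : ∀ w, ψ1 w = f₁ (g₁ w) := by
    intro w
    have h : ∃ w', g₁ w' = g₁ w := ⟨w, rfl⟩
    rw [hf₁def]
    simp only [dif_pos h]
    exact (hleaf₁ h.choose w h.choose_spec).symm
  have hf₂ : ∀ w, ψ2 w = f₂ (g₂ w) := by
    intro w
    have h : ∃ w', g₂ w' = g₂ w := ⟨w, rfl⟩
    rw [hf₂def]
    simp only [dif_pos h]
    exact (hleaf₂ h.choose w h.choose_spec).symm
  -- nondegenerate directions
  have hne₁ : ∀ w₀ : ℝ × ℝ, ∃ v, fderiv ℝ g₁ w₀ v ≠ 0 := by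
    intro w₀
    obtain ⟨v, _, hv1, _⟩ := vecs (htrans w₀)
    exact ⟨v, hv1⟩
  have hne₂ : ∀ w₀ : ℝ × ℝ, ∃ v, fderiv ℝ g₂ w₀ v ≠ 0 := by
    intro w₀
    obtain ⟨v, _, hv1, _⟩ := vecs (pair_swap (htrans w₀))
    exact ⟨v, hv1⟩
  -- differentiability of f₁ f₂ everywhere on the relevant sets
  have hd1 : ∀ w₀ : ℝ × ℝ, DifferentiableAt ℝ f₁ (g₁ w₀) := by
    intro w₀
    obtain ⟨v, hv⟩ := hne₁ w₀
    exact ((chart hg₁ hψ1 hf₁ w₀ v hv).1).differentiableAt one_ne_zero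
  have hd2 : ∀ w₀ : ℝ × ℝ, DifferentiableAt ℝ f₂ (g₂ w₀) := by
    intro w₀
    obtain ⟨v, hv⟩ := hne₂ w₀
    exact ((chart hg₂ hψ2 hf₂ w₀ v hv).1).differentiableAt one_ne_zero
  have hcomp1 : ∀ w₀ : ℝ × ℝ, fderiv ℝ ψ1 w₀
      = (fderiv ℝ f₁ (g₁ w₀)).comp (fderiv ℝ g₁ w₀) := by
    intro w₀
    rw [show ψ1 = f₁ ∘ g₁ from funext hf₁]
    exact fderiv_comp w₀ (hd1 w₀) (hg₁.differentiable one_ne_zero w₀)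
  have hcomp2 : ∀ w₀ : ℝ × ℝ, fderiv ℝ ψ2 w₀
      = (fderiv ℝ f₂ (g₂ w₀)).comp (fderiv ℝ g₂ w₀) := by
    intro w₀
    rw [show ψ2 = f₂ ∘ g₂ from funext hf₂]
    exact fderiv_comp w₀ (hd2 w₀) (hg₂.differentiable one_ne_zero w₀)
  -- component formulas for the derivative of ψ
  have hfst : ∀ w₀ : ℝ × ℝ, fderiv ℝ ψ1 w₀
      = (ContinuousLinearMap.fst ℝ ℂ ℂ).comp (fderiv ℝ ψ w₀) := by
    intro w₀
    exact ((hψ.differentiable one_ne_zero w₀).hasFDerivAt.fst).fderiv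
  have hsnd : ∀ w₀ : ℝ × ℝ, fderiv ℝ ψ2 w₀
      = (ContinuousLinearMap.snd ℝ ℂ ℂ).comp (fderiv ℝ ψ w₀) := by
    intro w₀
    exact ((hψ.differentiable one_ne_zero w₀).hasFDerivAt.snd).fderiv
  -- the key nonvanishing of derivatives
  have hder₁ : ∀ w₀ : ℝ × ℝ, deriv f₁ (g₁ w₀) ≠ 0 := by
    intro w₀ hz
    obtain ⟨v, hv0, hvL₁, hvL₂⟩ := vecs (htrans w₀)
    have h1 : fderiv ℝ ψ1 w₀ v = 0 := by
      rw [hcomp1 w₀, ContinuousLinearMap.comp_apply, fapp, hz, smul_zero]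
    have h2 : fderiv ℝ ψ2 w₀ v = 0 := by
      rw [hcomp2 w₀, ContinuousLinearMap.comp_apply, hvL₂, map_zero]
    have hpair : fderiv ℝ ψ w₀ v = 0 := by
      have e1 : (fderiv ℝ ψ w₀ v).1 = fderiv ℝ ψ1 w₀ v := by rw [hfst w₀]; rfl
      have e2 : (fderiv ℝ ψ w₀ v).2 = fderiv ℝ ψ2 w₀ v := by rw [hsnd w₀]; rfl
      exact Prod.ext_iff.2 ⟨e1.trans h1, e2.trans h2⟩
    apply hv0
    apply himm w₀
    rw [hpair, map_zero]
  have hder₂ : ∀ w₀ : ℝ × ℝ, deriv f₂ (g₂ w₀) ≠ 0 := by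
    intro w₀ hz
    obtain ⟨v, hv0, hvL₂, hvL₁⟩ := vecs (pair_swap (htrans w₀))
    have h2 : fderiv ℝ ψ2 w₀ v = 0 := by
      rw [hcomp2 w₀, ContinuousLinearMap.comp_apply, fapp, hz, smul_zero]
    have h1 : fderiv ℝ ψ1 w₀ v = 0 := by
      rw [hcomp1 w₀, ContinuousLinearMap.comp_apply, hvL₁, map_zero]
    have hpair : fderiv ℝ ψ w₀ v = 0 := by
      have e1 : (fderiv ℝ ψ w₀ v).1 = fderiv ℝ ψ1 w₀ v := by rw [hfst w₀]; rfl
      have e2 : (fderiv ℝ ψ w₀ v).2 = fderiv ℝ ψ2 w₀ v := by rw [hsnd w₀]; rfl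
      exact Prod.ext_iff.2 ⟨e1.trans h1, e2.trans h2⟩
    apply hv0
    apply himm w₀
    rw [hpair, map_zero]
  obtain ⟨γ₁, hγ₁cd, hγ₁d, hγ₁r⟩ := coord hψ1 hg₁ hf₁ hne₁ hder₁
  obtain ⟨γ₂, hγ₂cd, hγ₂d, hγ₂r⟩ := coord hψ2 hg₂ hf₂ hne₂ hder₂
  refine ⟨Set.range γ₁, Set.range γ₂, isRealCurve_range hγ₁cd hγ₁d,
    isRealCurve_range hγ₂cd hγ₂d, ?_⟩
  rintro p ⟨w, rfl⟩
  exact ⟨hγ₁r w, hγ₂r w⟩
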